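/- arXiv:2005.06854 — 4 statements merged into one kernel-verified Lean document; each statement's English description precedes it below -/
import Mathlib

section
/- (Monotonicity of α-largeness.) For every ordinal α < ω^ω and all finite sets X, Y ⊆ ℕ with 1 ≤ min X, if X is α-large and X ⊆ Y, then Y is α-large. -/
/-- An ordinal `α < ω^ω` is represented by the list of exponents of its Cantor
normal form, *least significant first*: the list `[n₀, n₁, …, n_k]` with
`n₀ ≤ n₁ ≤ ⋯ ≤ n_k` represents the ordinal `ω^{n_k} + ⋯ + ω^{n₁} + ω^{n₀}`.
`largeStep α m` is the ordinal `α[m]`:  `0[m] = 0`; `α[m] = β` if `α = β + 1`;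
and `α[m] = β + ω^{n-1}·m` if `α = β + ω^n` with `n ≥ 1` (canonical decomposition). -/
def largeStep : List ℕ → ℕ → List ℕ
  | [], _ => []
  | 0 :: β, _ => β
  | (n + 1) :: β, m => List.replicate m n ++ β

/-- `IsAlphaLarge α X` says that the finite set `X = {x₀ < x₁ < ⋯ < x_{ℓ-1}} ⊆ ℕ`
is `α`-large, i.e. `α[x₀][x₁]⋯[x_{ℓ-1}] = 0`. -/
def IsAlphaLarge (α : List ℕ) (X : Finset ℕ) : Prop :=
  (X.sort (· ≤ ·)).foldl largeStep α = []

noncomputable def evalL : List ℕ → Ordinal.{0}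
  | [] => 0
  | n :: t => evalL t + Ordinal.omega0 ^ (n : Ordinal)

theorem evalL_append (a b : List ℕ) : evalL (a ++ b) = evalL b + evalL a := by
  induction a with
  | nil => simp [evalL]
  | cons h t ih => simp [evalL, ih, add_assoc]

theorem evalL_replicate (m n : ℕ) :
    evalL (List.replicate m n) = Ordinal.omega0 ^ (n : Ordinal) * m := by
  induction m with
  | zero => simp [evalL]
  | succ m ih =>
      rw [List.replicate_succ]
      simp only [evalL, ih]
      rw [Nat.cast_succ, mul_add_one]

theorem evalL_tail_le (l : List ℕ) : evalL l.tail ≤ evalL l := by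
  cases l with
  | nil => simp
  | cons h t => exact le_self_add

theorem evalL_drop_le : ∀ (k : ℕ) (l : List ℕ), evalL (l.drop k) ≤ evalL l := by
  intro k
  induction k with
  | zero => simp
  | succ k ih =>
      intro l
      cases l with
      | nil => simp
      | cons h t =>
          calc evalL ((h :: t).drop (k+1)) = evalL (t.drop k) := rfl
            _ ≤ evalL t := ih t
            _ ≤ evalL (h :: t) := le_self_add

theorem largeStep_zero (l : List ℕ) : largeStep l 0 = l.tail := by
  rcases l with _ | ⟨_ | n, t⟩ <;> simp [largeStep]

theorem foldl_nil_large : ∀ L : List ℕ, L.foldl largeStep [] = [] := by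
  intro L
  induction L with
  | nil => rfl
  | cons h t ih => simpa [largeStep] using ih

theorem step_lt {l : List ℕ} (hl : l ≠ []) (m : ℕ) : evalL (largeStep l m) < evalL l := by
  rcases l with _ | ⟨_ | n, t⟩
  · exact absurd rfl hl
  · have : evalL t < evalL t + 1 := by
      simpa using add_lt_add_left zero_lt_one (evalL t)
    simpa [largeStep, evalL] using this
  · show evalL (List.replicate m n ++ t) < evalL ((n+1) :: t)
    rw [evalL_append, evalL_replicate]
    show evalL t + _ < evalL t + _
    apply add_lt_add_right
    have h1 : ((n+1 : ℕ) : Ordinal) = (n : Ordinal) + 1 := by push_cast; ring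
    rw [h1, Ordinal.opow_add, Ordinal.opow_one]
    exact (mul_lt_mul_iff_right₀ (Ordinal.opow_pos _ Ordinal.omega0_pos)).2
      (Ordinal.nat_lt_omega0 m)

theorem stepDown : ∀ (o : Ordinal) (δ : List ℕ), evalL δ = o → ∀ (y : ℕ) (L : List ℕ),
    List.Pairwise (· ≤ ·) L → (∀ a ∈ L, y ≤ a) → L.foldl largeStep δ = [] →
    L.foldl largeStep (largeStep δ y) = [] := by
  intro o
  induction o using Ordinal.induction with
  | h o ih =>
    intro δ hδ y L hL hy h
    subst hδ
    rcases δ with _ | ⟨b, β⟩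
    · simpa [largeStep] using foldl_nil_large L
    rcases L with _ | ⟨x, L₀⟩
    · exact absurd h (by simp)
    have hx : y ≤ x := hy x List.mem_cons_self
    have hL₀ : List.Pairwise (· ≤ ·) L₀ := hL.of_cons
    have hxall : ∀ a ∈ L₀, x ≤ a := fun a ha => List.rel_of_pairwise_cons hL ha
    rcases b with _ | n
    · -- δ = 0 :: β
      have hlt : evalL β < evalL (0 :: β) := step_lt (by simp) 0
      exact ih (evalL β) hlt β rfl x L₀ hL₀ hxall h
    · -- δ = (n+1) :: β
      have h' : L₀.foldl largeStep (List.replicate x n ++ β) = [] := h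
      have hdropfold : ∀ (k : ℕ) (ε : List ℕ), evalL ε < evalL ((n+1) :: β) →
          L₀.foldl largeStep ε = [] → L₀.foldl largeStep (ε.drop k) = [] := by
        intro k
        induction k with
        | zero => intro ε _ hε; simpa using hε
        | succ k ihk =>
            intro ε hlt hε
            have h1 : L₀.foldl largeStep (ε.drop k) = [] := ihk ε hlt hε
            have h2 := ih (evalL (ε.drop k)) (lt_of_le_of_lt (evalL_drop_le k ε) hlt)
              (ε.drop k) rfl 0 L₀ hL₀ (fun a _ => Nat.zero_le a) h1
            rw [largeStep_zero, List.tail_drop] at h2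
            exact h2
      have hstep_lt : evalL (List.replicate x n ++ β) < evalL ((n+1) :: β) :=
        step_lt (l := (n+1) :: β) (by simp) x
      have hdx : (List.replicate x n ++ β).drop (x - y) = List.replicate y n ++ β := by
        rw [List.drop_append_of_le_length (by simp [Nat.sub_le]),
          List.drop_replicate, Nat.sub_sub_self hx]
      have hy' : L₀.foldl largeStep (List.replicate y n ++ β) = [] := by
        have := hdropfold (x - y) _ hstep_lt h'
        rwa [hdx] at this
      have hlt2 : evalL (List.replicate y n ++ β) < evalL ((n+1) :: β) := by
        calc evalL (List.replicate y n ++ β)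
            = evalL ((List.replicate x n ++ β).drop (x - y)) := by rw [hdx]
          _ ≤ evalL (List.replicate x n ++ β) := evalL_drop_le _ _
          _ < _ := hstep_lt
      exact ih _ hlt2 _ rfl x L₀ hL₀ hxall hy'

theorem foldMono : ∀ (o : Ordinal) (α : List ℕ), evalL α = o → ∀ (L L' : List ℕ),
    List.Pairwise (· ≤ ·) L' → L.Sublist L' → L.foldl largeStep α = [] →
    L'.foldl largeStep α = [] := by
  intro o
  induction o using Ordinal.induction with
  | h o ih =>
    intro α hα L L' hL' hs h
    subst hα
    rcases α with _ | ⟨b, β⟩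
    · exact foldl_nil_large L'
    rcases L' with _ | ⟨y, L₀'⟩
    · rw [List.sublist_nil.mp hs] at h
      exact absurd h (by simp)
    have hL₀' : List.Pairwise (· ≤ ·) L₀' := hL'.of_cons
    have hstep := step_lt (l := b :: β) (by simp) y
    cases hs with
    | cons _ hs' =>
        -- L <+ L₀'
        have hLs : List.Pairwise (· ≤ ·) L := hL₀'.sublist hs'
        have hyL : ∀ a ∈ L, y ≤ a := fun a ha =>
          List.rel_of_pairwise_cons hL' (hs'.subset ha)
        have h1 : L.foldl largeStep (largeStep (b :: β) y) = [] :=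
          stepDown _ (b :: β) rfl y L hLs hyL h
        exact ih _ hstep _ rfl L L₀' hL₀' hs' h1
    | cons_cons _ hs' =>
        exact ih _ hstep _ rfl _ L₀' hL₀' hs' h

/-- **Monotonicity of α-largeness.** For every ordinal `α < ω^ω` and all finite
sets `X, Y ⊆ ℕ` with `1 ≤ min X`, if `X` is `α`-large and `X ⊆ Y`, then `Y` is
`α`-large. -/
theorem alphaLarge_mono (α : List ℕ) (hα : List.Pairwise (· ≤ ·) α)
    (X Y : Finset ℕ) (hmin : ∀ x ∈ X, 1 ≤ x)
    (hlarge : IsAlphaLarge α X) (hXY : X ⊆ Y) :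
    IsAlphaLarge α Y := by
  have hsub : (X.sort (· ≤ ·)).Sublist (Y.sort (· ≤ ·)) := by
    have hperm : (X.sort (· ≤ ·)).Subperm (Y.sort (· ≤ ·)) := by
      rw [← Multiset.coe_le, Finset.sort_eq, Finset.sort_eq]
      exact Finset.val_le_iff.mpr hXY
    exact List.sublist_of_subperm_of_pairwise hperm (Finset.pairwise_sort _ _)
      (Finset.pairwise_sort _ _)
  exact foldMono _ α rfl _ _ (Finset.pairwise_sort _ _) hsub hlarge
end

section
/- (Decomposition of α-largeness for sums of ω-powers.) Let α = ω^{n_k} + ⋯ + ω^{n_0} where n_k ≥ ⋯ ≥ n_0 are natural numbers. A finite set X ⊆ ℕ with min X ≥ 1 is α-large if and only if there exist sets X_0, …, X_k such that X is the disjoint union X_0 ⊔ ⋯ ⊔ X_k, each X_i is ω^{n_i}-large, and max X_i < min X_{i+1} for every i < k. -/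
lemma largeStep_nil (m : ℕ) : largeStep [] m = [] := rfl

lemma foldl_largeStep_nil (xs : List ℕ) : xs.foldl largeStep [] = [] := by
  induction xs with
  | nil => rfl
  | cons x xs ih => simpa [largeStep] using ih

lemma largeStep_append (L₁ L₂ : List ℕ) (h : L₁ ≠ []) (m : ℕ) :
    largeStep (L₁ ++ L₂) m = largeStep L₁ m ++ L₂ := by
  match L₁ with
  | [] => exact absurd rfl h
  | 0 :: β => simp [largeStep]
  | (n+1) :: β => simp [largeStep]

/-- Mutual induction pack: M (prepending a new smaller element preserves largeness)
and Z (removing the least term preserves largeness). -/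
lemma MZ : ∀ L : ℕ,
    (∀ (γ : List ℕ) (y : ℕ) (bs : List ℕ), bs.length ≤ L → 1 ≤ y →
      (y :: bs).Pairwise (· < ·) →
      bs.foldl largeStep γ = [] → bs.foldl largeStep (largeStep γ y) = []) ∧
    (∀ (e : ℕ) (δ : List ℕ) (bs : List ℕ), bs.length ≤ L → (∀ x ∈ bs, 1 ≤ x) →
      bs.Pairwise (· < ·) →
      bs.foldl largeStep (e :: δ) = [] → bs.foldl largeStep δ = []) := by
  intro L
  induction L with
  | zero =>
    constructor
    · intro γ y bs hlen _ _ hf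
      have : bs = [] := List.eq_nil_of_length_eq_zero (Nat.le_zero.mp hlen)
      subst this
      simp only [List.foldl_nil] at hf ⊢
      rw [hf]; rfl
    · intro e δ bs hlen _ _ hf
      have : bs = [] := List.eq_nil_of_length_eq_zero (Nat.le_zero.mp hlen)
      subst this
      simp at hf
  | succ L IH =>
    obtain ⟨IHM, IHZ⟩ := IH
    -- iterated Z at length ≤ L
    have Ziter : ∀ (c e : ℕ) (δ : List ℕ) (bs : List ℕ), bs.length ≤ L →
        (∀ x ∈ bs, 1 ≤ x) → bs.Pairwise (· < ·) →
        bs.foldl largeStep (List.replicate c e ++ δ) = [] → bs.foldl largeStep δ = [] := by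
      intro c
      induction c with
      | zero => intro e δ bs _ _ _ h; simpa using h
      | succ c ihc =>
        intro e δ bs hlen h1 hpw h
        rw [List.replicate_succ, List.cons_append] at h
        exact ihc e δ bs hlen h1 hpw (IHZ e _ bs hlen h1 hpw h)
    constructor
    · -- M
      intro γ y bs hlen hy hpw hf
      match γ, bs with
      | [], bs =>
        rw [largeStep_nil]
        exact foldl_largeStep_nil bs
      | c :: δ, [] => simp at hf
      | 0 :: δ, b :: bs' =>
        -- hf : foldl δ bs' = []   (since largeStep (0::δ) b = δ)
        simp only [List.foldl_cons] at hf ⊢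
        have hstep : largeStep (0 :: δ) y = δ := rfl
        have hstep' : largeStep (0 :: δ) b = δ := rfl
        rw [hstep' ] at hf
        rw [hstep]
        -- goal: foldl (largeStep δ b) bs' = []
        have hpw' : (b :: bs').Pairwise (· < ·) := hpw.of_cons
        have hb : 1 ≤ b := le_trans hy (le_of_lt ((List.pairwise_cons.mp hpw).1 _ (List.mem_cons_self)))
        exact IHM δ b bs' (by simp at hlen; omega) hb hpw' hf
      | (nn+1) :: δ, b :: bs' =>
        simp only [List.foldl_cons] at hf ⊢
        have hyb : y < b := (List.pairwise_cons.mp hpw).1 _ (List.mem_cons_self)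
        have hlen' : bs'.length ≤ L := by simp at hlen; omega
        have hpw' : (b :: bs').Pairwise (· < ·) := hpw.of_cons
        have hpw'' : bs'.Pairwise (· < ·) := hpw'.of_cons
        have h1' : ∀ x ∈ bs', 1 ≤ x := fun x hx =>
          le_trans hy (le_of_lt (lt_trans hyb ((List.pairwise_cons.mp hpw').1 _ hx)))
        -- hf : foldl (rep b nn ++ δ) bs' = []
        have hf' : bs'.foldl largeStep (List.replicate b nn ++ δ) = [] := by
          have : largeStep ((nn+1) :: δ) b = List.replicate b nn ++ δ := rfl
          rwa [this] at hf
        have hstepy : largeStep ((nn+1) :: δ) y = List.replicate y nn ++ δ := rfl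
        rw [hstepy]
        -- rep y nn = nn :: rep (y-1) nn  since y ≥ 1
        obtain ⟨y', rfl⟩ : ∃ y', y = y' + 1 := ⟨y - 1, by omega⟩
        match nn with
        | 0 =>
          have hsy : largeStep (List.replicate (y'+1) 0 ++ δ) b
              = List.replicate y' 0 ++ δ := by
            rw [List.replicate_succ, List.cons_append]; rfl
          rw [hsy]
          -- from hf' : foldl (rep b 0 ++ δ) bs' = [], remove (b - y') zeros
          have hdecomp : List.replicate b 0 ++ δ
              = List.replicate (b - y') 0 ++ (List.replicate y' 0 ++ δ) := by
            rw [← List.append_assoc, ← List.replicate_add]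
            congr 2
            omega
          rw [hdecomp] at hf'
          exact Ziter (b - y') 0 _ bs' hlen' h1' hpw'' hf'
        | m+1 =>
          have hsy : largeStep (List.replicate (y'+1) (m+1) ++ δ) b
              = List.replicate b m ++ (List.replicate y' (m+1) ++ δ) := by
            rw [List.replicate_succ, List.cons_append]; rfl
          rw [hsy]
          have hdecomp : List.replicate b (m+1) ++ δ
              = List.replicate (b - (y'+1)) (m+1) ++ (List.replicate (y'+1) (m+1) ++ δ) := by
            rw [← List.append_assoc, ← List.replicate_add]
            congr 2
            omega
          rw [hdecomp] at hf'
          have hσ : bs'.foldl largeStep (List.replicate (y'+1) (m+1) ++ δ) = [] :=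
            Ziter (b - (y'+1)) (m+1) _ bs' hlen' h1' hpw'' hf'
          have := IHM (List.replicate (y'+1) (m+1) ++ δ) b bs' hlen'
            (le_trans hy (le_of_lt hyb)) hpw' hσ
          have hls : largeStep (List.replicate (y'+1) (m+1) ++ δ) b
              = List.replicate b m ++ (List.replicate y' (m+1) ++ δ) := by
            rw [List.replicate_succ, List.cons_append]; rfl
          rwa [hls] at this
    · -- Z
      intro e δ bs hlen h1 hpw hf
      match bs with
      | [] => simp at hf
      | t :: ts =>
        simp only [List.foldl_cons] at hf ⊢
        have hlen' : ts.length ≤ L := by simp at hlen; omega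
        have ht : 1 ≤ t := h1 t (List.mem_cons_self)
        have hpw' : ts.Pairwise (· < ·) := hpw.of_cons
        have h1' : ∀ x ∈ ts, 1 ≤ x := fun x hx => h1 x (List.mem_cons_of_mem _ hx)
        match e with
        | 0 =>
          have : largeStep (0 :: δ) t = δ := rfl
          rw [this] at hf
          exact IHM δ t ts hlen' ht hpw hf
        | n+1 =>
          have : largeStep ((n+1) :: δ) t = List.replicate t n ++ δ := rfl
          rw [this] at hf
          have hδ : ts.foldl largeStep δ = [] := Ziter t n δ ts hlen' h1' hpw' hf
          exact IHM δ t ts hlen' ht hpw hδ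

/-- M: prepending a smaller element preserves largeness (at state level). -/
lemma foldl_largeStep_of_smaller {γ : List ℕ} {y : ℕ} {bs : List ℕ} (hy : 1 ≤ y)
    (hpw : (y :: bs).Pairwise (· < ·)) (h : bs.foldl largeStep γ = []) :
    bs.foldl largeStep (largeStep γ y) = [] :=
  (MZ bs.length).1 γ y bs le_rfl hy hpw h

/-- Prepending a list of smaller elements preserves largeness. -/
lemma foldl_largeStep_prepend {L : List ℕ} : ∀ {as bs : List ℕ},
    (as ++ bs).Pairwise (· < ·) → (∀ x ∈ as ++ bs, 1 ≤ x) →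
    bs.foldl largeStep L = [] → (as ++ bs).foldl largeStep L = [] := by
  intro as
  induction as with
  | nil => intro bs _ _ h; simpa using h
  | cons a as ih =>
    intro bs hpw h1 h
    have hrest : ((as ++ bs).foldl largeStep L) = [] :=
      ih hpw.of_cons (fun x hx => h1 x (List.mem_cons_of_mem _ hx)) h
    have := foldl_largeStep_of_smaller (h1 a (List.mem_cons_self)) hpw hrest
    simpa using this

/-- Splitting lemma, forward direction. -/
lemma split_foldl : ∀ (xs L₁ L₂ : List ℕ), L₁ ≠ [] →
    xs.foldl largeStep (L₁ ++ L₂) = [] →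
    ∃ as bs, xs = as ++ bs ∧ as.foldl largeStep L₁ = [] ∧ bs.foldl largeStep L₂ = [] := by
  intro xs
  induction xs with
  | nil =>
    intro L₁ L₂ h hf
    simp only [List.foldl_nil] at hf
    exact absurd (List.append_eq_nil_iff.mp hf).1 h
  | cons x xs ih =>
    intro L₁ L₂ h hf
    simp only [List.foldl_cons] at hf
    rw [largeStep_append L₁ L₂ h] at hf
    by_cases hs : largeStep L₁ x = []
    · refine ⟨[x], xs, rfl, by simpa using hs, ?_⟩
      rw [hs] at hf
      simpa using hf
    · obtain ⟨as, bs, hab, h1, h2⟩ := ih (largeStep L₁ x) L₂ hs hf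
      exact ⟨x :: as, bs, by rw [hab]; rfl, by simpa using h1, h2⟩

/-- Splitting lemma, backward direction. -/
lemma foldl_of_split : ∀ (as L₁ : List ℕ) (bs L₂ : List ℕ),
    (as ++ bs).Pairwise (· < ·) → (∀ x ∈ as ++ bs, 1 ≤ x) →
    as.foldl largeStep L₁ = [] → bs.foldl largeStep L₂ = [] →
    (as ++ bs).foldl largeStep (L₁ ++ L₂) = [] := by
  intro as
  induction as with
  | nil =>
    intro L₁ bs L₂ hpw h1 ha hb
    simp only [List.foldl_nil] at ha
    subst ha
    simpa using hb
  | cons a as ih =>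
    intro L₁ bs L₂ hpw h1 ha hb
    match L₁ with
    | [] =>
      exact foldl_largeStep_prepend hpw h1 (by simpa using hb)
    | c :: L₁' =>
      simp only [List.cons_append, List.foldl_cons] at ha ⊢
      rw [show (c :: (L₁' ++ L₂)) = (c :: L₁') ++ L₂ from rfl,
        largeStep_append (c :: L₁') L₂ (by simp)]
      exact ih (largeStep (c :: L₁') a) bs L₂ hpw.of_cons
        (fun x hx => h1 x (List.mem_cons_of_mem _ hx)) ha hb

lemma IsAlphaLarge.nonempty {c : ℕ} {γ : List ℕ} {Z : Finset ℕ}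
    (h : IsAlphaLarge (c :: γ) Z) : Z.Nonempty := by
  rcases Z.eq_empty_or_nonempty with rfl | hne
  · unfold IsAlphaLarge at h
    simp [Finset.sort_empty] at h
  · exact hne

lemma sort_toFinset_of_sorted {l : List ℕ} (hl : l.Pairwise (· < ·)) :
    l.toFinset.sort (· ≤ ·) = l :=
  (List.toFinset_sort _ (hl.imp ne_of_lt)).mpr (hl.imp le_of_lt)

lemma sort_eq_append {X A B : Finset ℕ} (hX : X = A ∪ B)
    (hAB : ∀ a ∈ A, ∀ b ∈ B, a < b) :
    X.sort (· ≤ ·) = A.sort (· ≤ ·) ++ B.sort (· ≤ ·) := by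
  set l := A.sort (· ≤ ·) ++ B.sort (· ≤ ·) with hl
  have hsorted : l.Pairwise (· ≤ ·) := by
    rw [hl]
    exact List.pairwise_append.mpr ⟨Finset.pairwise_sort _ _, Finset.pairwise_sort _ _,
      fun a ha b hb => le_of_lt (hAB a ((Finset.mem_sort _).mp ha) b ((Finset.mem_sort _).mp hb))⟩
  have hnodup : l.Nodup := by
    rw [hl, List.nodup_append]
    refine ⟨Finset.sort_nodup _ _, Finset.sort_nodup _ _, fun a ha b hb => ?_⟩
    exact ne_of_lt (hAB a ((Finset.mem_sort _).mp ha) b ((Finset.mem_sort _).mp hb))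
  have hXl : X = l.toFinset := by
    rw [hX]
    ext x
    simp [hl, Finset.mem_sort]
  rw [hXl, (List.toFinset_sort _ hnodup).mpr hsorted]

theorem alphaLarge_iff_decomposition' (k : ℕ) : ∀ (n : ℕ → ℕ)
    (X : Finset ℕ) (_ : ∀ x ∈ X, 1 ≤ x),
    IsAlphaLarge ((List.range (k + 1)).map n) X ↔
      ∃ Y : ℕ → Finset ℕ,
        X = (Finset.range (k + 1)).biUnion Y ∧
        (∀ i < k + 1, ∀ j < k + 1, i ≠ j → Disjoint (Y i) (Y j)) ∧
        (∀ i < k + 1, IsAlphaLarge [n i] (Y i)) ∧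
        (∀ i < k, ∀ a ∈ Y i, ∀ b ∈ Y (i + 1), a < b) := by
  induction k with
  | zero =>
    intro n X hmin
    have hr : (List.range (0 + 1)).map n = [n 0] := rfl
    rw [hr]
    constructor
    · intro h
      refine ⟨fun _ => X, ?_, ?_, ?_, ?_⟩
      · simp [Finset.range_one]
      · intro i hi j hj hij; omega
      · intro i hi
        interval_cases i
        exact h
      · intro i hi; omega
    · rintro ⟨Y, hX, -, hlarge, -⟩
      have : X = Y 0 := by simpa [Finset.range_one] using hX
      rw [this]
      exact hlarge 0 (by omega)
  | succ k IH =>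
    intro n X hmin
    set L₂ : List ℕ := (List.range (k + 1)).map (fun i => n (i + 1)) with hL₂
    have hα : (List.range (k + 1 + 1)).map n = n 0 :: L₂ := by
      rw [List.range_succ_eq_map, List.map_cons, List.map_map]
      rfl
    constructor
    · intro h
      unfold IsAlphaLarge at h
      rw [hα] at h
      obtain ⟨as, bs, hab, h1, h2⟩ :=
        split_foldl (X.sort (· ≤ ·)) [n 0] L₂ (by simp) (by simpa using h)
      have hpw : (as ++ bs).Pairwise (· < ·) := by
        rw [← hab]; exact X.sortedLT_sort.pairwise
      obtain ⟨hpwa, hpwb, hcross⟩ := List.pairwise_append.mp hpw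
      set A := as.toFinset with hA
      set B := bs.toFinset with hB
      have hsortA : A.sort (· ≤ ·) = as := sort_toFinset_of_sorted hpwa
      have hsortB : B.sort (· ≤ ·) = bs := sort_toFinset_of_sorted hpwb
      have hXAB : X = A ∪ B := by
        ext x
        rw [← Finset.mem_sort (· ≤ ·), hab]
        simp [hA, hB]
      have hminB : ∀ x ∈ B, 1 ≤ x := by
        intro x hx
        apply hmin
        rw [← Finset.mem_sort (· ≤ ·), hab]
        exact List.mem_append_right _ (List.mem_toFinset.mp hx)
      have hBlarge : IsAlphaLarge L₂ B := by
        unfold IsAlphaLarge; rw [hsortB]; exact h2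
      obtain ⟨Y', hBY, hdisj', hlarge', hord'⟩ :=
        (IH (fun i => n (i + 1)) B hminB).mp hBlarge
      refine ⟨fun i => match i with | 0 => A | j + 1 => Y' j, ?_, ?_, ?_, ?_⟩
      · ext x
        simp only [Finset.mem_biUnion, Finset.mem_range]
        constructor
        · intro hx
          rw [hXAB] at hx
          rcases Finset.mem_union.mp hx with hx | hx
          · exact ⟨0, by omega, by simpa using hx⟩
          · rw [hBY] at hx
            obtain ⟨j, hj, hxj⟩ := Finset.mem_biUnion.mp hx
            refine ⟨j + 1, by simp at hj; omega, by simpa using hxj⟩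
        · rintro ⟨i, hi, hxi⟩
          rw [hXAB]
          rcases i with _ | j
          · exact Finset.mem_union_left _ hxi
          · apply Finset.mem_union_right
            rw [hBY]
            exact Finset.mem_biUnion.mpr ⟨j, Finset.mem_range.mpr (by omega), hxi⟩
      · have hdAB : Disjoint A B := by
          rw [Finset.disjoint_left]
          intro a haA haB
          exact absurd (hcross a (List.mem_toFinset.mp haA) a (List.mem_toFinset.mp haB))
            (lt_irrefl a)
        have hsubB : ∀ j < k + 1, Y' j ⊆ B := by
          intro j hj
          rw [hBY]
          exact Finset.subset_biUnion_of_mem Y' (Finset.mem_range.mpr hj)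
        intro i hi j hj hij
        rcases i with _ | i <;> rcases j with _ | j
        · exact absurd rfl hij
        · exact hdAB.mono_right (hsubB j (by omega))
        · exact (hdAB.mono_right (hsubB i (by omega))).symm
        · exact hdisj' i (by omega) j (by omega) (by omega)
      · intro i hi
        rcases i with _ | j
        · show IsAlphaLarge [n 0] A
          unfold IsAlphaLarge
          rw [hsortA]
          exact h1
        · exact hlarge' j (by omega)
      · intro i hi a ha b hb
        rcases i with _ | j
        · have hb' : b ∈ B := by
            rw [hBY]
            exact Finset.mem_biUnion.mpr ⟨0, Finset.mem_range.mpr (by omega), hb⟩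
          exact hcross a (List.mem_toFinset.mp ha) b (List.mem_toFinset.mp hb')
        · exact hord' j (by omega) a ha b hb
    · rintro ⟨Y, hX, hdisj, hlarge, hord⟩
      have hne : ∀ i < k + 2, (Y i).Nonempty := by
        intro i hi
        exact (hlarge i hi).nonempty
      have hlt : ∀ d i, i + d + 1 < k + 2 → ∀ a ∈ Y i, ∀ b ∈ Y (i + d + 1), a < b := by
        intro d
        induction d with
        | zero => intro i hi a ha b hb; exact hord i (by omega) a ha b hb
        | succ d ihd =>
          intro i hi a ha b hb
          obtain ⟨c, hc⟩ := hne (i + d + 1) (by omega)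
          have h1 := ihd i (by omega) a ha c hc
          have h2 := hord (i + d + 1) (by omega) c hc b (by
            show b ∈ Y (i + d + 1 + 1); exact hb)
          omega
      set A := Y 0 with hA
      set B := (Finset.range (k + 1)).biUnion (fun j => Y (j + 1)) with hB
      have hmemB : ∀ b, b ∈ B ↔ ∃ j < k + 1, b ∈ Y (j + 1) := by
        intro b; simp [hB]
      have hXAB : X = A ∪ B := by
        rw [hX]
        ext x
        simp only [Finset.mem_biUnion, Finset.mem_range, Finset.mem_union, hmemB]
        constructor
        · rintro ⟨i, hi, hxi⟩
          rcases i with _ | j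
          · exact Or.inl hxi
          · exact Or.inr ⟨j, by omega, hxi⟩
        · rintro (hx | ⟨j, hj, hx⟩)
          · exact ⟨0, by omega, hx⟩
          · exact ⟨j + 1, by omega, hx⟩
      have hsubX : ∀ i < k + 2, Y i ⊆ X := by
        intro i hi
        rw [hX]
        exact Finset.subset_biUnion_of_mem Y (Finset.mem_range.mpr hi)
      have hminB : ∀ x ∈ B, 1 ≤ x := by
        intro x hx
        obtain ⟨j, hj, hxj⟩ := (hmemB x).mp hx
        exact hmin x (hsubX (j + 1) (by omega) hxj)
      have hBlarge : IsAlphaLarge L₂ B :=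
        (IH (fun i => n (i + 1)) B hminB).mpr
          ⟨fun j => Y (j + 1), rfl,
           fun i hi j hj hij => hdisj (i + 1) (by omega) (j + 1) (by omega) (by omega),
           fun i hi => hlarge (i + 1) (by omega),
           fun i hi a ha b hb => hord (i + 1) (by omega) a ha b hb⟩
      have hAB : ∀ a ∈ A, ∀ b ∈ B, a < b := by
        intro a ha b hb
        obtain ⟨j, hj, hxj⟩ := (hmemB b).mp hb
        exact hlt j 0 (by omega) a ha b (by simpa using hxj)
      have hsort : X.sort (· ≤ ·) = A.sort (· ≤ ·) ++ B.sort (· ≤ ·) :=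
        sort_eq_append hXAB hAB
      unfold IsAlphaLarge
      rw [hα, hsort]
      refine foldl_of_split (A.sort (· ≤ ·)) [n 0] (B.sort (· ≤ ·)) L₂ ?_ ?_ ?_ ?_
      · rw [← hsort]; exact X.sortedLT_sort.pairwise
      · intro x hx
        rw [← hsort, Finset.mem_sort] at hx
        exact hmin x hx
      · exact hlarge 0 (by omega)
      · exact hBlarge

/-- **Decomposition of α-largeness for sums of ω-powers.** Let
`α = ω^{n_k} + ⋯ + ω^{n_0}` with `n_k ≥ ⋯ ≥ n_0`.  A finite set `X ⊆ ℕ` with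
`min X ≥ 1` is `α`-large iff there are sets `X_0, …, X_k` such that `X` is the
disjoint union `X_0 ⊔ ⋯ ⊔ X_k`, each `X_i` is `ω^{n_i}`-large, and
`max X_i < min X_{i+1}` for every `i < k`. -/
theorem alphaLarge_iff_decomposition (k : ℕ) (n : ℕ → ℕ)
    (hmono : ∀ i, i < k → n i ≤ n (i + 1))
    (X : Finset ℕ) (hmin : ∀ x ∈ X, 1 ≤ x) :
    IsAlphaLarge ((List.range (k + 1)).map n) X ↔
      ∃ Y : ℕ → Finset ℕ,
        X = (Finset.range (k + 1)).biUnion Y ∧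
        (∀ i < k + 1, ∀ j < k + 1, i ≠ j → Disjoint (Y i) (Y j)) ∧
        (∀ i < k + 1, IsAlphaLarge [n i] (Y i)) ∧
        (∀ i < k, ∀ a ∈ Y i, ∀ b ∈ Y (i + 1), a < b) :=
  alphaLarge_iff_decomposition' k n X hmin
end

section
/- (Splitting ω^n·2-large sets.) Let n ∈ ℕ and let X ⊆ ℕ be a finite ω^n·2-large set with min X ≥ 1. If X = X_0 ∪ X_1, then at least one of X_0, X_1 is ω^n-large. -/
namespace OmegaSplit

open List

lemma step_nil (m : ℕ) : largeStep [] m = [] := rfl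
lemma step_cons_zero (l : List ℕ) (m : ℕ) : largeStep (0 :: l) m = l := rfl
lemma step_cons_succ (e : ℕ) (l : List ℕ) (m : ℕ) :
    largeStep ((e+1) :: l) m = List.replicate m e ++ l := rfl

lemma foldl_nil : ∀ ys : List ℕ, List.foldl largeStep [] ys = []
  | [] => rfl
  | _ :: ys => foldl_nil ys

lemma sorted_replicate (n a : ℕ) : (List.replicate n a).Pairwise (· ≤ ·) := by
  simp [List.Pairwise, List.pairwise_replicate]

lemma sorted_rep_append {l : List ℕ} (k e : ℕ) (hl : l.Pairwise (· ≤ ·))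
    (hb : ∀ b ∈ l, e ≤ b) : (List.replicate k e ++ l).Pairwise (· ≤ ·) := by
  induction k with
  | zero => simpa
  | succ k ih =>
      rw [List.replicate_succ, List.cons_append, List.pairwise_cons]
      refine ⟨?_, ih⟩
      intro b hb'
      rcases List.mem_append.mp hb' with h | h
      · exact le_of_eq (List.eq_of_mem_replicate h).symm
      · exact hb b h

lemma sorted_erase {l : List ℕ} (a : ℕ) (hl : l.Pairwise (· ≤ ·)) :
    (l.erase a).Pairwise (· ≤ ·) := hl.sublist (List.erase_sublist (a := a) (l := l))

lemma step_sorted {l : List ℕ} (m : ℕ) (hl : l.Pairwise (· ≤ ·)) :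
    (largeStep l m).Pairwise (· ≤ ·) := by
  match l with
  | [] => exact hl
  | 0 :: l => exact (List.pairwise_cons.mp hl).2
  | (e+1) :: l =>
      rw [step_cons_succ]
      exact sorted_rep_append m e (List.pairwise_cons.mp hl).2
        (fun b hb => le_trans (Nat.le_succ e) ((List.pairwise_cons.mp hl).1 b hb))

/-- canonical equality from permutation plus sortedness -/
lemma cEq {l₁ l₂ : List ℕ} (h : l₁.Perm l₂) (h1 : l₁.Pairwise (· ≤ ·))
    (h2 : l₂.Pairwise (· ≤ ·)) : l₁ = l₂ :=
  h.eq_of_pairwise' h1 h2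

/-- merge of two lists (sorted merge when inputs are sorted) -/
def mrg : List ℕ → List ℕ → List ℕ
  | [], v => v
  | u, [] => u
  | a :: u, b :: v => if a ≤ b then a :: mrg u (b :: v) else b :: mrg (a :: u) v
termination_by u v => u.length + v.length

@[simp] lemma mrg_nil_left (v : List ℕ) : mrg [] v = v := by rw [mrg]
@[simp] lemma mrg_nil_right (u : List ℕ) : mrg u [] = u := by
  cases u with
  | nil => rw [mrg]
  | cons a u => rw [mrg]; simp
lemma mrg_cons_cons (a b : ℕ) (u v : List ℕ) :
    mrg (a :: u) (b :: v) = if a ≤ b then a :: mrg u (b :: v) else b :: mrg (a :: u) v := by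
  rw [mrg]

lemma mrg_perm : ∀ u v : List ℕ, (mrg u v).Perm (u ++ v)
  | [], v => by simp
  | a :: u, [] => by simp
  | a :: u, b :: v => by
      rw [mrg_cons_cons]
      by_cases h : a ≤ b
      · rw [if_pos h]
        exact ((mrg_perm u (b :: v)).cons a)
      · rw [if_neg h]
        refine ((mrg_perm (a :: u) v).cons b).trans ?_
        exact (List.perm_middle).symm
termination_by u v => u.length + v.length

lemma mem_mrg {c : ℕ} {u v : List ℕ} : c ∈ mrg u v ↔ c ∈ u ∨ c ∈ v := by
  rw [(mrg_perm u v).mem_iff, List.mem_append]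

lemma mrg_sorted : ∀ {u v : List ℕ}, u.Pairwise (· ≤ ·) → v.Pairwise (· ≤ ·) →
    (mrg u v).Pairwise (· ≤ ·)
  | [], v, _, hv => by rw [mrg_nil_left]; exact hv
  | a :: u, [], hu, _ => by rw [mrg_nil_right]; exact hu
  | a :: u, b :: v, hu, hv => by
      rw [mrg_cons_cons]
      obtain ⟨ha, hu'⟩ := List.pairwise_cons.mp hu
      obtain ⟨hb, hv'⟩ := List.pairwise_cons.mp hv
      by_cases h : a ≤ b
      · rw [if_pos h, List.pairwise_cons]
        refine ⟨?_, mrg_sorted hu' hv⟩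
        intro c hc
        rcases mem_mrg.mp hc with h' | h'
        · exact ha c h'
        · rcases List.mem_cons.mp h' with rfl | h'
          · exact h
          · exact le_trans h (hb c h')
      · rw [if_neg h, List.pairwise_cons]
        have hba : b ≤ a := le_of_not_ge h
        refine ⟨?_, mrg_sorted hu hv'⟩
        intro c hc
        rcases mem_mrg.mp hc with h' | h'
        · rcases List.mem_cons.mp h' with rfl | h'
          · exact hba
          · exact le_trans hba (ha c h')
        · exact hb c h'
termination_by u v => u.length + v.length

lemma mrg_eq_nil {u v : List ℕ} (h : mrg u v = []) : u = [] ∧ v = [] := by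
  have := (mrg_perm u v).symm
  rw [h] at this
  have := this.eq_nil
  exact List.append_eq_nil_iff.mp this

lemma mrg_comm {u v : List ℕ} (hu : u.Pairwise (· ≤ ·)) (hv : v.Pairwise (· ≤ ·)) :
    mrg u v = mrg v u := by
  refine cEq ?_ (mrg_sorted hu hv) (mrg_sorted hv hu)
  exact (mrg_perm u v).trans ((List.perm_append_comm).trans (mrg_perm v u).symm)


lemma mrg_rep_append {e : ℕ} {m : List ℕ} (s : ℕ) (hm : m.Pairwise (· ≤ ·))
    (hb : ∀ b ∈ m, e ≤ b) :
    mrg (List.replicate s e) m = List.replicate s e ++ m :=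
  cEq (mrg_perm _ _) (mrg_sorted (sorted_replicate s e) hm) (sorted_rep_append s e hm hb)

lemma sorted_head_le {h c : ℕ} {w0 : List ℕ} (hw : (h :: w0).Pairwise (· ≤ ·))
    (hc : c ∈ w0) : h ≤ c := (List.pairwise_cons.mp hw).1 c hc

/-- One "move": delete an element, or replace an element `e+1` by `s ≤ t`
copies of `e` (re-sorted via `mrg`).  `Mv t v w` means `v` is obtained from `w`
by one move with budget `t`. -/
inductive Mv (t : ℕ) : List ℕ → List ℕ → Prop where
  | del (c : ℕ) {w : List ℕ} (hc : c ∈ w) : Mv t (w.erase c) w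
  | rep (e s : ℕ) {w : List ℕ} (hs : s ≤ t) (he : e + 1 ∈ w) :
      Mv t (mrg (List.replicate s e) (w.erase (e+1))) w

/-- `Sub t v w`: `v` is reachable from `w` by moves with budget `t`. -/
def Sub (t : ℕ) : List ℕ → List ℕ → Prop := Relation.ReflTransGen (Mv t)

lemma Sub.refl {t : ℕ} {v : List ℕ} : Sub t v v := Relation.ReflTransGen.refl

lemma Sub.single {t : ℕ} {v w : List ℕ} (h : Mv t v w) : Sub t v w :=
  Relation.ReflTransGen.single h

lemma Sub.trans {t : ℕ} {u v w : List ℕ} (h1 : Sub t u v) (h2 : Sub t v w) : Sub t u w :=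
  Relation.ReflTransGen.trans h1 h2

lemma Sub.tail {t : ℕ} {u v w : List ℕ} (h1 : Sub t u v) (h2 : Mv t v w) : Sub t u w :=
  Relation.ReflTransGen.tail h1 h2

lemma Mv_sorted {t : ℕ} {v w : List ℕ} (hw : w.Pairwise (· ≤ ·)) (hm : Mv t v w) :
    v.Pairwise (· ≤ ·) := by
  cases hm with
  | del c hc => exact sorted_erase c hw
  | rep e s hs he => exact mrg_sorted (sorted_replicate s e) (sorted_erase _ hw)

lemma Sub_sorted {t : ℕ} {v w : List ℕ} (hw : w.Pairwise (· ≤ ·)) (h : Sub t v w) :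
    v.Pairwise (· ≤ ·) := by
  induction h with
  | refl => exact hw
  | tail h1 h2 ih => exact ih (Mv_sorted hw h2)

lemma sub_nil {t : ℕ} {v : List ℕ} (h : Sub t v []) : v = [] := by
  rcases Relation.ReflTransGen.cases_tail h with h | ⟨c, _, hc⟩
  · exact h.symm
  · cases hc with
    | del c hc => simp at hc
    | rep e s hs he => simp at he

/-- a single `largeStep` makes a list easier -/
lemma stepSub {m : ℕ} {v : List ℕ} (hv : v.Pairwise (· ≤ ·)) :
    Sub m (largeStep v m) v := by
  cases v with
  | nil => exact Sub.refl
  | cons h v' =>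
    cases h with
    | zero =>
        rw [step_cons_zero]
        have h1 : Mv m ((0 :: v').erase 0) (0 :: v') := Mv.del 0 (by simp)
        rw [List.erase_cons_head] at h1
        exact Sub.single h1
    | succ e =>
        rw [step_cons_succ]
        have h1 : Mv m (mrg (List.replicate m e) (((e+1) :: v').erase (e+1))) ((e+1) :: v') :=
          Mv.rep e m le_rfl (by simp)
        rw [List.erase_cons_head] at h1
        have hv' := (List.pairwise_cons.mp hv).2
        have hb : ∀ b ∈ v', e ≤ b := fun b hb =>
          le_trans (Nat.le_succ e) ((List.pairwise_cons.mp hv).1 b hb)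
        rw [mrg_rep_append m hv' hb] at h1
        exact Sub.single h1

/-- delete a replicated block in the middle -/
lemma delRepMid {t : ℕ} (p : List ℕ) (c : ℕ) (m : List ℕ) (hcp : c ∉ p) :
    ∀ k, Sub t (p ++ m) (p ++ (List.replicate k c ++ m))
  | 0 => by simpa using Sub.refl
  | (k+1) => by
      have e2 : p ++ (List.replicate (k+1) c ++ m) = p ++ (c :: (List.replicate k c ++ m)) := by
        simp [List.replicate_succ]
      rw [e2]
      have h1 : Mv t ((p ++ (c :: (List.replicate k c ++ m))).erase c)
          (p ++ (c :: (List.replicate k c ++ m))) := Mv.del c (by simp)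
      rw [List.erase_append_right _ hcp, List.erase_cons_head] at h1
      exact (delRepMid p c m hcp k).tail h1

lemma delRep {t : ℕ} (c : ℕ) (m : List ℕ) (k : ℕ) :
    Sub t m (List.replicate k c ++ m) := by
  have h := delRepMid (t := t) [] c m (by simp) k
  simpa using h

/-- walk an element down, one level at a time -/
lemma downChain {t : ℕ} (ht : 1 ≤ t) {m : List ℕ} (hm : m.Pairwise (· ≤ ·)) (g : ℕ) :
    ∀ d, Sub t (mrg [g] m) (mrg [g + d] m)
  | 0 => Sub.refl
  | (d+1) => by
      refine (downChain ht hm g d).tail ?_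
      have h1 : Mv t (mrg (List.replicate 1 (g+d)) ((mrg [g+d+1] m).erase (g+d+1)))
          (mrg [g+d+1] m) := Mv.rep (g+d) 1 ht (mem_mrg.mpr (Or.inl (by simp)))
      have h2 : (mrg [g+d+1] m).erase (g+d+1) = m := by
        refine cEq ?_ (sorted_erase _ (mrg_sorted (by simp) hm)) hm
        have : (mrg [g+d+1] m).Perm ((g+d+1) :: m) := mrg_perm _ _
        have := this.erase (g+d+1)
        rwa [List.erase_cons_head] at this
      rwa [h2, List.replicate_one] at h1


lemma perm_shuffle (a b c : List ℕ) : (a ++ (b ++ c)).Perm (b ++ (a ++ c)) := by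
  have h1 : a ++ (b ++ c) = (a ++ b) ++ c := (List.append_assoc a b c).symm
  have h2 : b ++ (a ++ c) = (b ++ a) ++ c := (List.append_assoc b a c).symm
  rw [h1, h2]
  exact (List.perm_append_comm).append_right c

lemma delHeadStep {y : ℕ} (h : ℕ) {w0 : List ℕ} (hw0 : w0.Pairwise (· ≤ ·)) :
    Sub y (largeStep w0 y) (largeStep (h :: w0) y) := by
  cases h with
  | zero => rw [step_cons_zero]; exact stepSub hw0
  | succ g =>
      rw [step_cons_succ]
      exact (stepSub hw0).trans (delRep g w0 y)

/-- Key lemma: a move with budget `t` is preserved by `largeStep` with any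
value `y ≥ t` (with new budget `y`). -/
lemma M2 {t y : ℕ} {v w : List ℕ} (hw : w.Pairwise (· ≤ ·)) (hm : Mv t v w) (hty : t ≤ y) :
    Sub y (largeStep v y) (largeStep w y) := by
  cases hm with
  | del c hc =>
      cases w with
      | nil => simp at hc
      | cons h w0 =>
        have hw0 := (List.pairwise_cons.mp hw).2
        by_cases hch : h = c
        · subst hch
          rw [List.erase_cons_head]
          exact delHeadStep h hw0
        · have hc0 : c ∈ w0 := by
            rcases List.mem_cons.mp hc with h' | h'
            · exact absurd h'.symm hch
            · exact h'
          rw [List.erase_cons_tail (by simp [hch])]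
          cases h with
          | zero =>
              rw [step_cons_zero, step_cons_zero]
              exact Sub.single (Mv.del c hc0)
          | succ g =>
              rw [step_cons_succ, step_cons_succ]
              have hgc : c ∉ List.replicate y g := by
                intro hmem
                have h1 := List.eq_of_mem_replicate hmem
                have h2 := sorted_head_le hw hc0
                omega
              have h1 : Mv y ((List.replicate y g ++ w0).erase c) (List.replicate y g ++ w0) :=
                Mv.del c (by simp [hc0])
              rw [List.erase_append_right _ hgc] at h1
              exact Sub.single h1
  | rep e s hs he =>
      cases w with
      | nil => simp at he
      | cons h w0 =>
        have hw0 := (List.pairwise_cons.mp hw).2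
        by_cases heh : h = e + 1
        · subst heh
          rw [List.erase_cons_head]
          have hb : ∀ b ∈ w0, e ≤ b := fun b hb =>
            le_trans (Nat.le_succ e) (sorted_head_le hw hb)
          rw [mrg_rep_append s hw0 hb]
          rw [step_cons_succ]
          cases s with
          | zero =>
              simp only [List.replicate, List.nil_append]
              exact (stepSub hw0).trans (delRep e w0 y)
          | succ σ =>
              have hσy : σ + 1 ≤ y := le_trans hs hty
              cases e with
              | zero =>
                  have hv1 : List.replicate (σ+1) 0 ++ w0 = 0 :: (List.replicate σ 0 ++ w0) := by
                    rw [List.replicate_succ]; rfl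
                  rw [hv1, step_cons_zero]
                  have h3 : List.replicate y 0 ++ w0
                      = List.replicate (y - σ) 0 ++ (List.replicate σ 0 ++ w0) := by
                    rw [← List.append_assoc, ← List.replicate_add]
                    congr 2
                    omega
                  rw [h3]
                  exact delRep 0 _ (y - σ)
              | succ g =>
                  have hv1 : List.replicate (σ+1) (g+1) ++ w0
                      = (g+1) :: (List.replicate σ (g+1) ++ w0) := by
                    rw [List.replicate_succ]; rfl
                  rw [hv1, step_cons_succ]
                  have hA : List.replicate y (g+1) ++ w0
                      = (g+1) :: (List.replicate (y-1) (g+1) ++ w0) := by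
                    have h5 : List.replicate y (g+1) = (g+1) :: List.replicate (y-1) (g+1) := by
                      conv_lhs => rw [show y = (y-1)+1 from by omega]
                      rw [List.replicate_succ]
                    rw [h5]; rfl
                  rw [hA]
                  have h1 : Mv y (mrg (List.replicate y g)
                      (((g+1) :: (List.replicate (y-1) (g+1) ++ w0)).erase (g+1)))
                      ((g+1) :: (List.replicate (y-1) (g+1) ++ w0)) :=
                    Mv.rep g y le_rfl (by simp)
                  rw [List.erase_cons_head] at h1
                  have hsort : (List.replicate (y-1) (g+1) ++ w0).Pairwise (· ≤ ·) :=
                    sorted_rep_append _ _ hw0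
                      (fun b hb => le_trans (Nat.le_succ _) (sorted_head_le hw hb))
                  have h2 : mrg (List.replicate y g) (List.replicate (y-1) (g+1) ++ w0)
                      = List.replicate y g ++ (List.replicate (y-1) (g+1) ++ w0) := by
                    refine mrg_rep_append y hsort ?_
                    intro b hb
                    rcases List.mem_append.mp hb with h' | h'
                    · have := List.eq_of_mem_replicate h'; omega
                    · have := sorted_head_le hw h'; omega
                  rw [h2] at h1
                  have h3 : List.replicate (y-1) (g+1) ++ w0
                      = List.replicate ((y-1)-σ) (g+1) ++ (List.replicate σ (g+1) ++ w0) := by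
                    rw [← List.append_assoc, ← List.replicate_add]
                    congr 2
                    omega
                  have h4 : Sub y (List.replicate y g ++ (List.replicate σ (g+1) ++ w0))
                      (List.replicate y g ++ (List.replicate ((y-1)-σ) (g+1)
                        ++ (List.replicate σ (g+1) ++ w0))) :=
                    delRepMid _ _ _ (by
                      intro hmem
                      have := List.eq_of_mem_replicate hmem
                      omega) _
                  rw [← h3] at h4
                  exact h4.tail h1
        · have he0 : e + 1 ∈ w0 := by
            rcases List.mem_cons.mp he with h' | h'
            · exact absurd h'.symm heh
            · exact h'
          have hhe : h ≤ e + 1 := sorted_head_le hw he0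
          have hhe' : h ≤ e := by
            rcases Nat.lt_or_ge h (e+1) with h' | h'
            · omega
            · exact absurd (le_antisymm hhe h') heh
          rw [List.erase_cons_tail (by simp [heh])]
          have hsorte : (w0.erase (e+1)).Pairwise (· ≤ ·) := sorted_erase _ hw0
          have hbe : ∀ b ∈ w0.erase (e+1), h ≤ b := fun b hb =>
            sorted_head_le hw (List.mem_of_mem_erase hb)
          have hvE : mrg (List.replicate s e) (h :: w0.erase (e+1))
              = h :: mrg (List.replicate s e) (w0.erase (e+1)) := by
            refine cEq ?_ ?_ ?_
            · refine (mrg_perm _ _).trans ?_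
              refine (List.perm_middle).trans ?_
              exact ((mrg_perm (List.replicate s e) (w0.erase (e+1))).symm.cons h)
            · refine mrg_sorted (sorted_replicate _ _) ?_
              rw [List.pairwise_cons]
              exact ⟨hbe, hsorte⟩
            · rw [List.pairwise_cons]
              constructor
              · intro b hb
                rcases mem_mrg.mp hb with h' | h'
                · have := List.eq_of_mem_replicate h'; omega
                · exact hbe b h'
              · exact mrg_sorted (sorted_replicate _ _) hsorte
          rw [hvE]
          cases h with
          | zero =>
              rw [step_cons_zero, step_cons_zero]
              exact Sub.single (Mv.rep e s (hs.trans hty) he0)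
          | succ g =>
              rw [step_cons_succ, step_cons_succ]
              have hg : e + 1 ∉ List.replicate y g := by
                intro hmem
                have := List.eq_of_mem_replicate hmem
                omega
              have h1 : Mv y (mrg (List.replicate s e)
                  ((List.replicate y g ++ w0).erase (e+1))) (List.replicate y g ++ w0) :=
                Mv.rep e s (hs.trans hty) (by simp [he0])
              rw [List.erase_append_right _ hg] at h1
              have h2 : mrg (List.replicate s e) (List.replicate y g ++ w0.erase (e+1))
                  = List.replicate y g ++ mrg (List.replicate s e) (w0.erase (e+1)) := by
                refine cEq ?_ ?_ ?_
                · refine (mrg_perm _ _).trans ?_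
                  refine (perm_shuffle _ _ _).trans ?_
                  exact (mrg_perm (List.replicate s e) (w0.erase (e+1))).symm.append_left _
                · refine mrg_sorted (sorted_replicate _ _) ?_
                  refine sorted_rep_append _ _ hsorte ?_
                  intro b hb
                  have := hbe b hb
                  omega
                · refine sorted_rep_append _ _
                    (mrg_sorted (sorted_replicate _ _) hsorte) ?_
                  intro b hb
                  rcases mem_mrg.mp hb with h' | h'
                  · have := List.eq_of_mem_replicate h'; omega
                  · have := hbe b h'; omega
              rw [h2] at h1
              exact Sub.single h1


lemma sub_step {t y : ℕ} {v w : List ℕ} (hw : w.Pairwise (· ≤ ·)) (h : Sub t v w)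
    (hty : t ≤ y) : Sub y (largeStep v y) (largeStep w y) := by
  induction h with
  | refl => exact Sub.refl
  | tail h1 h2 ih =>
      exact (ih (Mv_sorted hw h2)).trans (M2 hw h2 hty)

/-- Transfer principle: if `v` is reachable from `w` with budget `t`, then any
weakly increasing list of elements `≥ t` that kills `w` also kills `v`. -/
lemma transfer : ∀ (ys : List ℕ) {t : ℕ} {v w : List ℕ}, ys.Pairwise (· ≤ ·) →
    (∀ z ∈ ys, t ≤ z) → w.Pairwise (· ≤ ·) → Sub t v w →
    List.foldl largeStep w ys = [] → List.foldl largeStep v ys = []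
  | [], t, v, w, _, _, _, hsub, hkill => by
      simp only [List.foldl_nil] at hkill ⊢
      rw [hkill] at hsub
      exact sub_nil hsub
  | y :: ys, t, v, w, hys, hbd, hw, hsub, hkill => by
      simp only [List.foldl_cons] at hkill ⊢
      have hty : t ≤ y := hbd y (by simp)
      have h1 : Sub y (largeStep v y) (largeStep w y) := sub_step hw hsub hty
      exact transfer ys (List.pairwise_cons.mp hys).2 (List.pairwise_cons.mp hys).1
        (step_sorted y hw) h1 hkill


/-- stepping a merge acts on the left head when it is smaller -/
lemma step_mrg_left {a b : ℕ} {u' v' : List ℕ} (hab : a ≤ b)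
    (hu : (a :: u').Pairwise (· ≤ ·)) (hv : (b :: v').Pairwise (· ≤ ·)) (x : ℕ) :
    largeStep (mrg (a :: u') (b :: v')) x = mrg (largeStep (a :: u') x) (b :: v') := by
  rw [mrg_cons_cons, if_pos hab]
  cases a with
  | zero => rw [step_cons_zero, step_cons_zero]
  | succ c =>
      rw [step_cons_succ, step_cons_succ]
      have hu' := (List.pairwise_cons.mp hu).2
      have hcu : ∀ e ∈ u', c ≤ e := fun e he =>
        le_trans (Nat.le_succ c) ((List.pairwise_cons.mp hu).1 e he)
      symm
      refine cEq ?_ ?_ ?_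
      · refine (mrg_perm _ _).trans ?_
        rw [List.append_assoc]
        exact ((mrg_perm u' (b :: v')).symm.append_left _)
      · refine mrg_sorted ?_ hv
        exact sorted_rep_append _ _ hu' hcu
      · refine sorted_rep_append _ _ (mrg_sorted hu' hv) ?_
        intro e he
        rcases mem_mrg.mp he with h' | h'
        · exact hcu e h'
        · rcases List.mem_cons.mp h' with rfl | h'
          · omega
          · have := sorted_head_le hv h'
            omega

/-- The theft swap: trading a step on the `u`-copy for a step on the `v`-copy,
when the head of `u` is strictly smaller. -/
lemma theftSub {a b x : ℕ} {u' v' : List ℕ} (hu : (a :: u').Pairwise (· ≤ ·))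
    (hv : (b :: v').Pairwise (· ≤ ·)) (hab : a < b) :
    Sub (x+1) (mrg (a :: u') (largeStep (b :: v') x))
      (mrg (largeStep (a :: u') x) (b :: v')) := by
  obtain ⟨c, rfl⟩ : ∃ c, b = c + 1 := ⟨b - 1, by omega⟩
  have hac : a ≤ c := by omega
  have hu' := (List.pairwise_cons.mp hu).2
  have hv' := (List.pairwise_cons.mp hv).2
  have hau : ∀ e ∈ u', a ≤ e := (List.pairwise_cons.mp hu).1
  have hbv : ∀ e ∈ v', c + 1 ≤ e := (List.pairwise_cons.mp hv).1
  rw [step_cons_succ]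
  set W := mrg u' ((c+1) :: v') with hW
  have hWsorted : W.Pairwise (· ≤ ·) := mrg_sorted hu' hv
  -- Stage 1 : from mrg (largeStep (a::u') x) ((c+1)::v') down to W
  have stage1 : Sub (x+1) W (mrg (largeStep (a :: u') x) ((c+1) :: v')) := by
    cases a with
    | zero => rw [step_cons_zero]; exact Sub.refl
    | succ d =>
        rw [step_cons_succ]
        have heq : mrg (List.replicate x d ++ u') ((c+1) :: v')
            = List.replicate x d ++ W := by
          refine cEq ?_ ?_ ?_
          · refine (mrg_perm _ _).trans ?_
            rw [List.append_assoc]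
            exact ((mrg_perm u' ((c+1) :: v')).symm.append_left _)
          · refine mrg_sorted (sorted_rep_append _ _ hu' ?_) hv
            intro e he; have := hau e he; omega
          · refine sorted_rep_append _ _ hWsorted ?_
            intro e he
            rcases mem_mrg.mp he with h' | h'
            · have := hau e h'; omega
            · rcases List.mem_cons.mp h' with rfl | h'
              · omega
              · have := hbv e h'; omega
        rw [heq]
        exact delRep d W x
  -- Stage 2 : replace the element c+1 of W by x+1 copies of c
  have hcW : c + 1 ∈ W := mem_mrg.mpr (Or.inr (by simp))
  have stage2 : Mv (x+1) (mrg (List.replicate (x+1) c) (W.erase (c+1))) W :=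
    Mv.rep c (x+1) le_rfl hcW
  -- bookkeeping about W.erase (c+1)
  have hWe : (W.erase (c+1)).Perm (u' ++ v') := by
    have p1 : W.Perm ((c+1) :: (u' ++ v')) := (mrg_perm _ _).trans List.perm_middle
    have p2 := p1.erase (c+1)
    rwa [List.erase_cons_head] at p2
  have hWeSorted : (W.erase (c+1)).Pairwise (· ≤ ·) := sorted_erase _ hWsorted
  have hWeGe : ∀ e ∈ W.erase (c+1), a ≤ e := by
    intro e he
    rcases mem_mrg.mp (List.mem_of_mem_erase he) with h' | h'
    · exact hau e h'
    · rcases List.mem_cons.mp h' with rfl | h'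
      · omega
      · have := hbv e h'; omega
  -- the inner list for the down-chain
  set m : List ℕ := mrg (List.replicate x c) (W.erase (c+1)) with hm
  have hmSorted : m.Pairwise (· ≤ ·) := mrg_sorted (sorted_replicate _ _) hWeSorted
  have hmGe : ∀ e ∈ m, a ≤ e := by
    intro e he
    rcases mem_mrg.mp he with h' | h'
    · have := List.eq_of_mem_replicate h'; omega
    · exact hWeGe e h'
  have stage2' : mrg (List.replicate (x+1) c) (W.erase (c+1)) = mrg [c+1-1] m := by
    refine cEq ?_ (mrg_sorted (sorted_replicate _ _) hWeSorted)
      (mrg_sorted (by simp) hmSorted)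
    have p1 : (mrg (List.replicate (x+1) c) (W.erase (c+1))).Perm
        (c :: (List.replicate x c ++ W.erase (c+1))) := by
      refine (mrg_perm _ _).trans ?_
      rw [List.replicate_succ, List.cons_append]
    refine p1.trans ?_
    have p2 : (List.replicate x c ++ W.erase (c+1)).Perm m := (mrg_perm _ _).symm
    have p3 := p2.cons c
    refine p3.trans ?_
    exact ((mrg_perm [c] m).symm)
  -- Stage 3 : walk one copy of c down to a
  have stage3 : Sub (x+1) (mrg [a] m) (mrg [a + (c - a)] m) :=
    downChain (by omega) hmSorted a (c - a)
  have hca : a + (c - a) = c := by omega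
  -- final identification
  have final : mrg (a :: u') (List.replicate x c ++ v') = mrg [a] m := by
    refine cEq ?_
      (mrg_sorted hu (sorted_rep_append _ _ hv' (fun e he => by have := hbv e he; omega)))
      (mrg_sorted (by simp) hmSorted)
    refine (mrg_perm _ _).trans ?_
    have p1 : (a :: u') ++ (List.replicate x c ++ v') =
        a :: (u' ++ (List.replicate x c ++ v')) := rfl
    rw [p1]
    refine (List.Perm.cons a ?_).trans ((mrg_perm [a] m).symm)
    -- u' ++ (rep x c ++ v')  ~  m = mrg (rep x c) (W.erase (c+1))
    refine (perm_shuffle _ _ _).trans ?_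
    -- rep x c ++ (u' ++ v') ~ m
    refine (List.Perm.append_left _ hWe.symm).trans (mrg_perm _ _).symm
  rw [final]
  have hchain : Sub (x+1) (mrg [a] m) W := by
    have := stage3
    rw [hca] at this
    rw [stage2'] at stage2
    have h2 : Sub (x+1) (mrg [c+1-1] m) W := Sub.single stage2
    simp only [Nat.add_sub_cancel] at h2
    exact this.trans h2
  exact hchain.trans stage1

lemma theftSub' {a b x : ℕ} {u' v' : List ℕ} (hu : (a :: u').Pairwise (· ≤ ·))
    (hv : (b :: v').Pairwise (· ≤ ·)) (hba : b < a) :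
    Sub (x+1) (mrg (largeStep (a :: u') x) (b :: v'))
      (mrg (a :: u') (largeStep (b :: v') x)) := by
  have h := theftSub (x := x) hv hu hba
  rwa [mrg_comm hv (step_sorted x hu), mrg_comm (step_sorted x hv) hu] at h


lemma sort_eq_cons {A : Finset ℕ} {x : ℕ} (hxA : x ∈ A) (hmin : ∀ b ∈ A, x ≤ b) :
    A.sort (· ≤ ·) = x :: ((A.erase x).sort (· ≤ ·)) := by
  refine cEq ?_ (Finset.pairwise_sort _ _) ?_
  · refine (Finset.sort_perm_toList _ _).trans ?_
    have h1 : A.toList = (insert x (A.erase x)).toList := by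
      rw [Finset.insert_erase hxA]
    rw [h1]
    refine (Finset.toList_insert (Finset.notMem_erase x A)).trans ?_
    exact (((A.erase x).sort_perm_toList (· ≤ ·)).symm.cons x)
  · rw [List.pairwise_cons]
    constructor
    · intro b hb
      have hb' : b ∈ A.erase x := (Finset.mem_sort _).mp hb
      exact hmin b (Finset.mem_of_mem_erase hb')
    · exact Finset.pairwise_sort _ _

/-- The main induction: natural-sum splitting of killers. -/
lemma main : ∀ (N : ℕ) (X X0 X1 : Finset ℕ) (u v : List ℕ),
    X.card ≤ N → u.Pairwise (· ≤ ·) → v.Pairwise (· ≤ ·) → X = X0 ∪ X1 →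
    List.foldl largeStep (mrg u v) (X.sort (· ≤ ·)) = [] →
    List.foldl largeStep u (X0.sort (· ≤ ·)) = [] ∨
    List.foldl largeStep v (X1.sort (· ≤ ·)) = [] := by
  intro N
  induction N with
  | zero =>
      intro X X0 X1 u v hcard hu hv hsplit hlarge
      have hX : X = ∅ := Finset.card_eq_zero.mp (le_antisymm hcard (Nat.zero_le _))
      rw [hX] at hlarge
      rw [Finset.sort_empty] at hlarge
      simp only [List.foldl_nil] at hlarge
      obtain ⟨hu0, -⟩ := mrg_eq_nil hlarge
      subst hu0
      exact Or.inl (foldl_nil _)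
  | succ N ih =>
      intro X X0 X1 u v hcard hu hv hsplit hlarge
      rcases X.eq_empty_or_nonempty with hX | hne
      · rw [hX] at hlarge
        rw [Finset.sort_empty] at hlarge
        simp only [List.foldl_nil] at hlarge
        obtain ⟨hu0, -⟩ := mrg_eq_nil hlarge
        subst hu0
        exact Or.inl (foldl_nil _)
      -- nonempty case
      set x := X.min' hne with hxdef
      have hxX : x ∈ X := X.min'_mem hne
      have hminX : ∀ b ∈ X, x ≤ b := fun b hb => X.min'_le b hb
      have hsortX : X.sort (· ≤ ·) = x :: ((X.erase x).sort (· ≤ ·)) :=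
        sort_eq_cons hxX hminX
      have hcard' : (X.erase x).card ≤ N := by
        have := Finset.card_erase_lt_of_mem hxX
        omega
      have hrest_sorted : ((X.erase x).sort (· ≤ ·)).Pairwise (· ≤ ·) :=
        Finset.pairwise_sort _ _
      have hrest_ge : ∀ z ∈ (X.erase x).sort (· ≤ ·), x ≤ z := by
        intro z hz
        have hz' : z ∈ X.erase x := (Finset.mem_sort _).mp hz
        exact hminX z (Finset.mem_of_mem_erase hz')
      have hrest_gt : ∀ z ∈ (X.erase x).sort (· ≤ ·), x + 1 ≤ z := by
        intro z hz
        have hz' : z ∈ X.erase x := (Finset.mem_sort _).mp hz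
        have h1 := (Finset.mem_erase.mp hz').1
        have h2 := hminX z (Finset.mem_of_mem_erase hz')
        omega
      have hsub0 : X0 ⊆ X := by rw [hsplit]; exact Finset.subset_union_left
      have hsub1 : X1 ⊆ X := by rw [hsplit]; exact Finset.subset_union_right
      have hx01 : x ∈ X0 ∨ x ∈ X1 := by
        rw [hsplit] at hxX
        exact Finset.mem_union.mp hxX
      -- trivial cases : u or v empty
      rcases u with - | ⟨a, u'⟩
      · exact Or.inl (foldl_nil _)
      rcases v with - | ⟨b, v'⟩
      · exact Or.inr (foldl_nil _)
      -- lifts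
      have lift_left : x ∈ X0 →
          List.foldl largeStep (largeStep (a :: u') x) ((X0.erase x).sort (· ≤ ·)) = [] →
          List.foldl largeStep (a :: u') (X0.sort (· ≤ ·)) = [] := by
        intro hx0 hkill
        rw [sort_eq_cons hx0 (fun e he => hminX e (hsub0 he)), List.foldl_cons]
        exact hkill
      have lift_right : x ∈ X1 →
          List.foldl largeStep (largeStep (b :: v') x) ((X1.erase x).sort (· ≤ ·)) = [] →
          List.foldl largeStep (b :: v') (X1.sort (· ≤ ·)) = [] := by
        intro hx1 hkill
        rw [sort_eq_cons hx1 (fun e he => hminX e (hsub1 he)), List.foldl_cons]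
        exact hkill
      have lift_left' :
          List.foldl largeStep (a :: u') ((X0.erase x).sort (· ≤ ·)) = [] →
          List.foldl largeStep (a :: u') (X0.sort (· ≤ ·)) = [] := by
        intro hkill
        by_cases hx0 : x ∈ X0
        · refine lift_left hx0 ?_
          refine transfer _ (Finset.pairwise_sort _ _) ?_ hu (stepSub hu) hkill
          intro z hz
          have hz' : z ∈ X0.erase x := (Finset.mem_sort _).mp hz
          exact hminX z (hsub0 (Finset.mem_of_mem_erase hz'))
        · rwa [Finset.erase_eq_of_notMem hx0] at hkill
      have lift_right' :
          List.foldl largeStep (b :: v') ((X1.erase x).sort (· ≤ ·)) = [] →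
          List.foldl largeStep (b :: v') (X1.sort (· ≤ ·)) = [] := by
        intro hkill
        by_cases hx1 : x ∈ X1
        · refine lift_right hx1 ?_
          refine transfer _ (Finset.pairwise_sort _ _) ?_ hv (stepSub hv) hkill
          intro z hz
          have hz' : z ∈ X1.erase x := (Finset.mem_sort _).mp hz
          exact hminX z (hsub1 (Finset.mem_of_mem_erase hz'))
        · rwa [Finset.erase_eq_of_notMem hx1] at hkill
      -- the four cases
      by_cases hx0 : x ∈ X0
      case pos =>
        by_cases hab : a ≤ b
        case pos =>
          -- CLEAN LEFT
          have hlarge' : List.foldl largeStep (mrg (largeStep (a :: u') x) (b :: v'))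
              ((X.erase x).sort (· ≤ ·)) = [] := by
            rw [hsortX, List.foldl_cons, step_mrg_left hab hu hv x] at hlarge
            exact hlarge
          have hsplit' : X.erase x = (X0.erase x) ∪ (X1.erase x) := by
            rw [hsplit, Finset.erase_union_distrib]
          rcases ih (X.erase x) (X0.erase x) (X1.erase x) (largeStep (a :: u') x) (b :: v')
              hcard' (step_sorted x hu) hv hsplit' hlarge' with hL | hR
          · left
            rw [sort_eq_cons hx0 (fun e he => hminX e (hsub0 he)), List.foldl_cons]
            exact hL
          · right
            exact lift_right' hR
        case neg =>
          have hba : b < a := by omega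
          by_cases hx1 : x ∈ X1
          case pos =>
            -- CLEAN RIGHT
            have hlarge' : List.foldl largeStep (mrg (a :: u') (largeStep (b :: v') x))
                ((X.erase x).sort (· ≤ ·)) = [] := by
              rw [hsortX, List.foldl_cons, mrg_comm hu hv,
                step_mrg_left (le_of_lt hba) hv hu x,
                mrg_comm (step_sorted x hv) hu] at hlarge
              exact hlarge
            have hsplit' : X.erase x = (X0.erase x) ∪ (X1.erase x) := by
              rw [hsplit, Finset.erase_union_distrib]
            rcases ih (X.erase x) (X0.erase x) (X1.erase x) (a :: u') (largeStep (b :: v') x)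
                hcard' hu (step_sorted x hv) hsplit' hlarge' with hL | hR
            · left
              exact lift_left' hL
            · right
              rw [sort_eq_cons hx1 (fun e he => hminX e (hsub1 he)), List.foldl_cons]
              exact hR
          case neg =>
            -- MIRROR THEFT : x only in X0, head of v strictly smaller
            have hlarge' : List.foldl largeStep (mrg (a :: u') (largeStep (b :: v') x))
                ((X.erase x).sort (· ≤ ·)) = [] := by
              rw [hsortX, List.foldl_cons, mrg_comm hu hv,
                step_mrg_left (le_of_lt hba) hv hu x,
                mrg_comm (step_sorted x hv) hu] at hlarge
              exact hlarge
            have hlarge'' : List.foldl largeStep (mrg (largeStep (a :: u') x) (b :: v'))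
                ((X.erase x).sort (· ≤ ·)) = [] :=
              transfer _ hrest_sorted hrest_gt
                (mrg_sorted hu (step_sorted x hv)) (theftSub' hu hv hba) hlarge'
            have hsplit' : X.erase x = (X0.erase x) ∪ X1 := by
              rw [hsplit, Finset.erase_union_distrib, Finset.erase_eq_of_notMem hx1]
            rcases ih (X.erase x) (X0.erase x) X1 (largeStep (a :: u') x) (b :: v')
                hcard' (step_sorted x hu) hv hsplit' hlarge'' with hL | hR
            · left
              rw [sort_eq_cons hx0 (fun e he => hminX e (hsub0 he)), List.foldl_cons]
              exact hL
            · right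
              exact hR
      case neg =>
        have hx1 : x ∈ X1 := hx01.resolve_left hx0
        by_cases hba : b ≤ a
        case pos =>
          -- CLEAN RIGHT
          have hlarge' : List.foldl largeStep (mrg (a :: u') (largeStep (b :: v') x))
              ((X.erase x).sort (· ≤ ·)) = [] := by
            rw [hsortX, List.foldl_cons, mrg_comm hu hv,
              step_mrg_left hba hv hu x,
              mrg_comm (step_sorted x hv) hu] at hlarge
            exact hlarge
          have hsplit' : X.erase x = (X0.erase x) ∪ (X1.erase x) := by
            rw [hsplit, Finset.erase_union_distrib]
          rcases ih (X.erase x) (X0.erase x) (X1.erase x) (a :: u') (largeStep (b :: v') x)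
              hcard' hu (step_sorted x hv) hsplit' hlarge' with hL | hR
          · left
            exact lift_left' hL
          · right
            rw [sort_eq_cons hx1 (fun e he => hminX e (hsub1 he)), List.foldl_cons]
            exact hR
        case neg =>
          -- THEFT : x only in X1, head of u strictly smaller
          have hab : a < b := by omega
          have hlarge' : List.foldl largeStep (mrg (largeStep (a :: u') x) (b :: v'))
              ((X.erase x).sort (· ≤ ·)) = [] := by
            rw [hsortX, List.foldl_cons, step_mrg_left (le_of_lt hab) hu hv x] at hlarge
            exact hlarge
          have hlarge'' : List.foldl largeStep (mrg (a :: u') (largeStep (b :: v') x))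
              ((X.erase x).sort (· ≤ ·)) = [] :=
            transfer _ hrest_sorted hrest_gt
              (mrg_sorted (step_sorted x hu) hv) (theftSub hu hv hab) hlarge'
          have hsplit' : X.erase x = X0 ∪ (X1.erase x) := by
            rw [hsplit, Finset.erase_union_distrib, Finset.erase_eq_of_notMem hx0]
          rcases ih (X.erase x) X0 (X1.erase x) (a :: u') (largeStep (b :: v') x)
              hcard' hu (step_sorted x hv) hsplit' hlarge'' with hL | hR
          · left
            exact hL
          · right
            rw [sort_eq_cons hx1 (fun e he => hminX e (hsub1 he)), List.foldl_cons]
            exact hR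

end OmegaSplit

/-- **Splitting `ω^n · 2`-large sets.** Let `n ∈ ℕ` and let `X ⊆ ℕ` be a
finite `ω^n · 2`-large set with `min X ≥ 1`.  If `X = X_0 ∪ X_1`, then at
least one of `X_0, X_1` is `ω^n`-large.  (The ordinal `ω^n · 2 = ω^n + ω^n`
is represented by the exponent list `[n, n]`.) -/
theorem omegaPow_two_large_split (n : ℕ) (X X0 X1 : Finset ℕ)
    (hmin : ∀ x ∈ X, 1 ≤ x)
    (hlarge : IsAlphaLarge [n, n] X) (hsplit : X = X0 ∪ X1) :
    IsAlphaLarge [n] X0 ∨ IsAlphaLarge [n] X1 := by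
  have hmrg : OmegaSplit.mrg [n] [n] = [n, n] := by
    rw [OmegaSplit.mrg_cons_cons, if_pos le_rfl, OmegaSplit.mrg_nil_left]
  unfold IsAlphaLarge at hlarge ⊢
  exact OmegaSplit.main X.card X X0 X1 [n] [n] le_rfl (by simp) (by simp) hsplit
    (by rw [hmrg]; exact hlarge)
end

section
/- (ω²-large intervals grow at least exponentially.) For all natural numbers x ≥ 1 and y, if the interval (x, y] = {x+1, x+2, …, y} is ω²-large, then y > x·2^x (and in particular y ≥ x²). -/
lemma largeStep_length (γ : List ℕ) (m : ℕ) : γ.length ≤ (largeStep γ m).length + 1 := by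
  match γ with
  | [] => simp [largeStep]
  | 0 :: β => simp [largeStep]
  | (n+1) :: β =>
      simp only [largeStep, List.length_append, List.length_replicate, List.length_cons]
      omega

lemma foldl_nil_length : ∀ (l : List ℕ) (γ : List ℕ),
    List.foldl largeStep γ l = [] → γ.length ≤ l.length := by
  intro l
  induction l with
  | nil => intro γ h; simp at h; simp [h]
  | cons a l ih =>
    intro γ h
    simp only [List.foldl_cons] at h
    have := ih _ h
    have := largeStep_length γ a
    simp only [List.length_cons]
    omega

lemma foldl_zeros : ∀ (k : ℕ) (l : List ℕ) (β : List ℕ), k ≤ l.length →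
    List.foldl largeStep (List.replicate k 0 ++ β) l
      = List.foldl largeStep β (l.drop k) := by
  intro k
  induction k with
  | zero => intro l β _; simp
  | succ k ih =>
    intro l β hl
    match l with
    | [] => simp at hl
    | a :: l =>
      simp only [List.replicate_succ, List.cons_append, List.foldl_cons, List.drop_succ_cons]
      rw [show largeStep (0 :: (List.replicate k 0 ++ β)) a = List.replicate k 0 ++ β from rfl]
      exact ih l β (by simpa using Nat.succ_le_succ_iff.mp hl)

lemma range'_drop (s n k : ℕ) (h : k ≤ n) :
    (List.range' s n).drop k = List.range' (s + k) (n - k) := by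
  have h1 : List.range' s k ++ List.range' (s + 1 * k) (n - k) 1 = List.range' s (n - k + k) 1 :=
    by rw [Nat.add_comm (n - k) k]; exact List.range'_append (s := s) (m := k) (n := n - k) (step := 1)
  rw [one_mul] at h1
  conv_lhs => rw [show n = n - k + k by omega, ← h1]
  exact List.drop_left' (by simp)

lemma foldl_ones : ∀ (j a n : ℕ),
    List.foldl largeStep (List.replicate j 1) (List.range' a n) = [] →
    2 ^ j * (a + 1) ≤ n + (a + 1) := by
  intro j
  induction j with
  | zero => intro a n _; simp
  | succ j ih =>
    intro a n h
    match n with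
    | 0 =>
      simp [List.replicate_succ] at h
    | n + 1 =>
      rw [List.range'_succ, List.foldl_cons, List.replicate_succ] at h
      rw [show largeStep (1 :: List.replicate j 1) a
            = List.replicate a 0 ++ List.replicate j 1 from rfl] at h
      have hlen : a + j ≤ n := by
        have := foldl_nil_length _ _ h
        simpa using this
      rw [foldl_zeros a _ _ (by simp; omega), range'_drop _ _ _ (by omega)] at h
      have := ih (a + 1 + a) (n - a) h
      have hp : 1 ≤ 2 ^ j := Nat.one_le_two_pow
      have h3 : 2 ^ j * (a + 1 + a + 1) = 2 ^ j * 2 * (a + 1) := by ring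
      rw [pow_succ]
      omega

lemma sort_Ioc (a b : ℕ) :
    (Finset.Ioc a b).sort (· ≤ ·) = List.range' (a + 1) (b - a) := by
  refine (fun hp h1 h2 => List.Perm.eq_of_pairwise' (r := (· < ·)) h1 h2 hp) ?_ ?_ ?_
  · rw [← Multiset.coe_eq_coe, Finset.sort_eq]
    rfl
  · exact (Finset.sortedLT_sort _).pairwise
  · exact List.pairwise_lt_range'

/-- **ω²-large intervals grow at least exponentially.** For all `x ≥ 1` and
`y`, if the interval `(x, y] = {x+1, …, y}` is `ω²`-large, then `y > x·2^x`
(and in particular `y ≥ x²`). -/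
theorem omegaSq_large_interval_exponential (x y : ℕ) (hx : 1 ≤ x)
    (h : IsAlphaLarge [2] (Finset.Ioc x y)) :
    x * 2 ^ x < y ∧ x ^ 2 ≤ y := by
  unfold IsAlphaLarge at h
  rw [sort_Ioc] at h
  have hn : 1 ≤ y - x := by simpa using foldl_nil_length _ _ h
  obtain ⟨n, hyx⟩ : ∃ n, y - x = n + 1 := ⟨y - x - 1, by omega⟩
  rw [hyx, List.range'_succ, List.foldl_cons] at h
  rw [show largeStep [2] (x + 1) = List.replicate (x + 1) 1 by simp [largeStep]] at h
  have key := foldl_ones (x + 1) (x + 1 + 1) n h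
  have hy : 2 ^ (x + 1) * (x + 1 + 1 + 1) ≤ y + 2 := by omega
  have hp : x < 2 ^ x := Nat.lt_two_pow_self
  rw [pow_succ] at hy
  have h1 : x * 2 ^ x < y := by nlinarith [Nat.one_le_two_pow (n := x)]
  refine ⟨h1, ?_⟩
  have h2 : x * x ≤ x * 2 ^ x := Nat.mul_le_mul_left x hp.le
  have h3 : x ^ 2 = x * x := sq x
  omega
end
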